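/- Let Q be a rack. The map r^n sending a Yang-Baxter n-cochain f to its quasi-diagonal part (keeping entries with x_i ≡ y_i for all i, setting others to zero) commutes with each partial coboundary d_i^n, hence with d^n; it is a retraction of cochain complexes onto the quasi-diagonal subcomplex, so quasi-diagonal cohomology is a direct summand of Yang-Baxter cohomology. -/
import Mathlib


open scoped Classical

variable {Q : Type*}

/-- A rack: every right translation is a bijection, and self-distributivity holds. -/
def IsRack (op : Q → Q → Q) : Prop :=
  (∀ y : Q, Function.Bijective fun x => op x y) ∧
    ∀ a b c : Q, op (op a b) c = op (op a c) (op b c)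

/-- Behavioural equivalence: `x ≡ y` iff `a ∗ x = a ∗ y` for all `a`. -/
def behEq (op : Q → Q → Q) (x y : Q) : Prop := ∀ a : Q, op a x = op a y

noncomputable section

variable {A : Type*} [CommRing A]

/-- The iterated action `x_i ^ (x_{i+1} ⋯ x_n)`. -/
def opChain (op : Q → Q → Q) {n : ℕ} (x : Fin (n + 1) → Q) (i : Fin (n + 1)) : Q :=
  ((List.finRange (n + 1)).filter fun j => i < j).foldl (fun a j => op a (x j)) (x i)

/-- The partial Yang-Baxter coboundary `d_i^n`. -/
def dpart (op : Q → Q → Q) {n : ℕ} (i : Fin (n + 1))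
    (f : (Fin n → Q) → (Fin n → Q) → A) :
    (Fin (n + 1) → Q) → (Fin (n + 1) → Q) → A := fun x y =>
  f (x ∘ i.succAbove) (y ∘ i.succAbove) *
      (if opChain op x i = opChain op y i then (1 : A) else 0) -
    f (fun j => if i.succAbove j < i then op (x (i.succAbove j)) (x i) else x (i.succAbove j))
      (fun j => if i.succAbove j < i then op (y (i.succAbove j)) (y i) else y (i.succAbove j)) *
      (if x i = y i then (1 : A) else 0)

/-- The Yang-Baxter coboundary `d^n = Σ (-1)^i d_i^n`. -/
def dYB (op : Q → Q → Q) {n : ℕ} (f : (Fin n → Q) → (Fin n → Q) → A) :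
    (Fin (n + 1) → Q) → (Fin (n + 1) → Q) → A := fun x y =>
  ∑ i : Fin (n + 1), (-1 : A) ^ (i : ℕ) * dpart op i f x y

end

noncomputable section
variable {A : Type*} [CommRing A]

/-- A matrix is quasi-diagonal if its entries vanish whenever `x i ≢ y i` for some `i`. -/
def IsQDiag (op : Q → Q → Q) {n : ℕ} (f : (Fin n → Q) → (Fin n → Q) → A) : Prop :=
  ∀ x y : Fin n → Q, (∃ i, ¬ behEq op (x i) (y i)) → f x y = 0

/-- The projection `r^n` onto the quasi-diagonal part of a cochain. -/
def rQDiag (op : Q → Q → Q) {n : ℕ} (f : (Fin n → Q) → (Fin n → Q) → A) :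
    (Fin n → Q) → (Fin n → Q) → A := fun x y =>
  if ∀ i, behEq op (x i) (y i) then f x y else 0

section AuxLemmas

variable {A : Type*} [CommRing A]

lemma behEq_refl' (op : Q → Q → Q) (x : Q) : behEq op x x := fun _ => rfl

lemma behEq_op_iff (op : Q → Q → Q) (h : IsRack op) (x y b : Q) :
    behEq op (op x b) (op y b) ↔ behEq op x y := by
  constructor
  · intro H a
    have hx := H (op a b)
    rw [← h.2 a x b, ← h.2 a y b] at hx
    exact (h.1 b).1 hx
  · intro H a
    obtain ⟨a', ha'⟩ := (h.1 b).2 a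
    simp only at ha'
    subst ha'
    rw [← h.2 a' x b, ← h.2 a' y b, H a']

lemma foldl_op_congr (op : Q → Q → Q) {ι : Type*} (x y : ι → Q) (L : List ι)
    (hL : ∀ j ∈ L, behEq op (x j) (y j)) (s : Q) :
    L.foldl (fun a j => op a (x j)) s = L.foldl (fun a j => op a (y j)) s := by
  induction L generalizing s with
  | nil => rfl
  | cons j L ih =>
    simp only [List.foldl_cons]
    rw [hL j (by simp)]
    exact ih (fun k hk => hL k (by simp [hk])) _

lemma foldl_op_inj (op : Q → Q → Q) (h : IsRack op) {ι : Type*} (x : ι → Q) (L : List ι) :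
    Function.Injective fun s => L.foldl (fun a j => op a (x j)) s := by
  induction L with
  | nil => exact fun a b hab => hab
  | cons j L ih =>
    intro a b hab
    simp only [List.foldl_cons] at hab
    exact (h.1 (x j)).1 (ih hab)

lemma eq_of_opChain_eq (op : Q → Q → Q) (h : IsRack op) {n : ℕ} {x y : Fin (n + 1) → Q}
    {i : Fin (n + 1)} (hbeh : ∀ j, i < j → behEq op (x j) (y j))
    (heq : opChain op x i = opChain op y i) : x i = y i := by
  unfold opChain at heq
  rw [foldl_op_congr op y x _
        (fun j hj a => (hbeh j (by simpa using (List.mem_filter.mp hj).2) a).symm) (y i)] at heq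
  exact foldl_op_inj op h x _ heq

lemma dpart_rQDiag (op : Q → Q → Q) (h : IsRack op) {n : ℕ} (i : Fin (n + 1))
    (f : (Fin n → Q) → (Fin n → Q) → A) :
    dpart op i (rQDiag op f) = rQDiag op (dpart op i f) := by
  funext x y
  by_cases hxy : ∀ j, behEq op (x j) (y j)
  · have h2 : ∀ j : Fin n,
        behEq op (if i.succAbove j < i then op (x (i.succAbove j)) (x i) else x (i.succAbove j))
          (if i.succAbove j < i then op (y (i.succAbove j)) (y i) else y (i.succAbove j)) := by
      intro j
      by_cases hc : i.succAbove j < i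
      · simp only [if_pos hc]
        rw [hxy i (x (i.succAbove j))]
        exact (behEq_op_iff op h _ _ _).mpr (hxy _)
      · simp only [if_neg hc]; exact hxy _
    simp only [dpart, rQDiag, Function.comp_apply]
    rw [if_pos hxy, if_pos h2, if_pos (fun j => hxy (i.succAbove j))]
  · have hrhs : rQDiag op (dpart op i f) x y = 0 := if_neg hxy
    rw [hrhs]
    have term1 : rQDiag op f (x ∘ i.succAbove) (y ∘ i.succAbove) *
        (if opChain op x i = opChain op y i then (1 : A) else 0) = 0 := by
      by_cases hd : opChain op x i = opChain op y i
      · rw [if_pos hd, mul_one]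
        apply if_neg
        intro hall
        apply hxy
        have hbs : ∀ j, j ≠ i → behEq op (x j) (y j) := by
          intro j hj
          obtain ⟨k, rfl⟩ := Fin.exists_succAbove_eq hj
          exact hall k
        have hi : x i = y i := eq_of_opChain_eq op h (fun j hj => hbs j (ne_of_gt hj)) hd
        intro j
        by_cases hji : j = i
        · subst hji; rw [hi]; exact behEq_refl' op _
        · exact hbs j hji
      · rw [if_neg hd, mul_zero]
    have term2 : rQDiag op f
        (fun j => if i.succAbove j < i then op (x (i.succAbove j)) (x i) else x (i.succAbove j))
        (fun j => if i.succAbove j < i then op (y (i.succAbove j)) (y i) else y (i.succAbove j)) *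
        (if x i = y i then (1 : A) else 0) = 0 := by
      by_cases hd : x i = y i
      · rw [if_pos hd, mul_one]
        apply if_neg
        intro hall
        apply hxy
        have hbs : ∀ k : Fin n, behEq op (x (i.succAbove k)) (y (i.succAbove k)) := by
          intro k
          have hk := hall k
          by_cases hc : i.succAbove k < i
          · simp only [if_pos hc] at hk
            rw [← hd] at hk
            exact (behEq_op_iff op h _ _ _).mp hk
          · simp only [if_neg hc] at hk
            exact hk
        intro j
        by_cases hji : j = i
        · subst hji; rw [hd]; exact behEq_refl' op _
        · obtain ⟨k, rfl⟩ := Fin.exists_succAbove_eq hji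
          exact hbs k
      · rw [if_neg hd, mul_zero]
    simp only [dpart]
    rw [term1, term2, sub_zero]

end AuxLemmas

/-- The quasi-diagonal projection commutes with each partial coboundary `d_i^n`, hence
with `d^n`; it is a retraction of cochain complexes onto the quasi-diagonal subcomplex,
so quasi-diagonal cohomology is a direct summand of Yang-Baxter cohomology. -/
theorem rQDiag_retraction (op : Q → Q → Q) (h : IsRack op) {n : ℕ}
    (f : (Fin n → Q) → (Fin n → Q) → A) :
    (∀ i : Fin (n + 1), dpart op i (rQDiag op f) = rQDiag op (dpart op i f)) ∧
      dYB op (rQDiag op f) = rQDiag op (dYB op f) ∧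
      IsQDiag op (rQDiag op f) ∧
      (IsQDiag op f → rQDiag op f = f) := by
  have hpart := fun i : Fin (n + 1) => dpart_rQDiag op h i f
  refine ⟨hpart, ?_, ?_, ?_⟩
  · funext x y
    have hkey : ∀ i : Fin (n + 1), dpart op i (rQDiag op f) x y =
        if ∀ j, behEq op (x j) (y j) then dpart op i f x y else 0 := by
      intro i; rw [hpart i]; rfl
    simp only [dYB, hkey, rQDiag]
    by_cases hc : ∀ j, behEq op (x j) (y j)
    · simp [hc, dYB]
    · simp [hc]
  · intro x y hxy
    exact if_neg fun hall => hxy.elim fun i hi => hi (hall i)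
  · intro hq
    funext x y
    by_cases hc : ∀ j, behEq op (x j) (y j)
    · exact if_pos hc
    · rw [rQDiag, if_neg hc]
      push_neg at hc
      exact (hq x y hc).symm


end
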